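/- Let n ≥ 3 and let D_{2n} be the dihedral group of order 2n. The number of z-classes of D_{2n} is 4 if n ≡ 0 (mod 4), and 3 otherwise (i.e., if n ≡ 1, 2, 3 mod 4). -/

import Mathlib

open scoped Matrix

/-- Two elements are z-equivalent if their centralizers are conjugate. -/
def zEquiv {G : Type*} [Group G] (g₁ g₂ : G) : Prop :=
  ∃ t : G, (Subgroup.centralizer {g₁}).map (MulAut.conj t).toMonoidHom =
    Subgroup.centralizer {g₂}

/-- The set of z-classes of a group. -/
def zClasses (G : Type*) [Group G] : Set (Set G) :=
  Set.range fun g => {h | zEquiv g h}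

section general
variable {G : Type*} [Group G]

lemma map_conj_centralizer (t g : G) :
    (Subgroup.centralizer {g}).map (MulAut.conj t).toMonoidHom
      = Subgroup.centralizer {t * g * t⁻¹} := by
  ext x
  simp only [Subgroup.mem_map, Subgroup.mem_centralizer_iff, Set.mem_singleton_iff,
    forall_eq, MulEquiv.coe_toMonoidHom, MulAut.conj_apply]
  constructor
  · rintro ⟨y, hy, rfl⟩
    calc t * g * t⁻¹ * (t * y * t⁻¹) = t * (g * y) * t⁻¹ := by group
    _ = t * (y * g) * t⁻¹ := by rw [hy]
    _ = t * y * t⁻¹ * (t * g * t⁻¹) := by group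
  · intro hx
    refine ⟨t⁻¹ * x * t, ?_, by group⟩
    have h1 : g * (t⁻¹ * x * t) = t⁻¹ * (t * g * t⁻¹ * x) * t := by group
    rw [h1, hx]; group

lemma zEquiv_iff (g₁ g₂ : G) : zEquiv g₁ g₂ ↔
    ∃ t, Subgroup.centralizer {t * g₁ * t⁻¹} = Subgroup.centralizer {g₂} := by
  unfold zEquiv; simp_rw [map_conj_centralizer]

lemma zEquiv_refl (g : G) : zEquiv g g :=
  (zEquiv_iff g g).2 ⟨1, by group⟩

lemma zEquiv_symm {g₁ g₂ : G} (h : zEquiv g₁ g₂) : zEquiv g₂ g₁ := by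
  rw [zEquiv_iff] at h ⊢
  obtain ⟨t, ht⟩ := h
  refine ⟨t⁻¹, ?_⟩
  calc Subgroup.centralizer {t⁻¹ * g₂ * t⁻¹⁻¹}
      = (Subgroup.centralizer {g₂}).map (MulAut.conj t⁻¹).toMonoidHom :=
        (map_conj_centralizer _ _).symm
    _ = (Subgroup.centralizer {t * g₁ * t⁻¹}).map (MulAut.conj t⁻¹).toMonoidHom := by rw [ht]
    _ = Subgroup.centralizer {t⁻¹ * (t * g₁ * t⁻¹) * t⁻¹⁻¹} := map_conj_centralizer _ _
    _ = Subgroup.centralizer {g₁} := by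
        rw [show t⁻¹ * (t * g₁ * t⁻¹) * t⁻¹⁻¹ = g₁ by group]

lemma zEquiv_trans {g₁ g₂ g₃ : G} (h : zEquiv g₁ g₂) (h' : zEquiv g₂ g₃) : zEquiv g₁ g₃ := by
  rw [zEquiv_iff] at h h' ⊢
  obtain ⟨t, ht⟩ := h
  obtain ⟨s, hs⟩ := h'
  refine ⟨s * t, ?_⟩
  calc Subgroup.centralizer {s * t * g₁ * (s * t)⁻¹}
      = Subgroup.centralizer {s * (t * g₁ * t⁻¹) * s⁻¹} := by
        rw [show s * t * g₁ * (s * t)⁻¹ = s * (t * g₁ * t⁻¹) * s⁻¹ by group]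
    _ = (Subgroup.centralizer {t * g₁ * t⁻¹}).map (MulAut.conj s).toMonoidHom :=
        (map_conj_centralizer _ _).symm
    _ = (Subgroup.centralizer {g₂}).map (MulAut.conj s).toMonoidHom := by rw [ht]
    _ = Subgroup.centralizer {s * g₂ * s⁻¹} := map_conj_centralizer _ _
    _ = Subgroup.centralizer {g₃} := hs

lemma zEquiv_of_cent_eq {g₁ g₂ : G}
    (h : Subgroup.centralizer {g₁} = Subgroup.centralizer {g₂}) : zEquiv g₁ g₂ :=
  (zEquiv_iff g₁ g₂).2 ⟨1, by rw [one_mul, inv_one, mul_one]; exact h⟩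

lemma zEquiv_conj (t g : G) : zEquiv g (t * g * t⁻¹) :=
  (zEquiv_iff _ _).2 ⟨t, rfl⟩

lemma zClass_eq {g₁ g₂ : G} (h : zEquiv g₁ g₂) :
    {h | zEquiv g₁ h} = {h | zEquiv g₂ h} := by
  ext x
  exact ⟨fun hx => zEquiv_trans (zEquiv_symm h) hx, fun hx => zEquiv_trans h hx⟩

lemma zEquiv_of_zClass_eq {g₁ g₂ : G}
    (h : ({h | zEquiv g₁ h} : Set G) = {h | zEquiv g₂ h}) : zEquiv g₁ g₂ := by
  have : g₂ ∈ {h | zEquiv g₂ h} := zEquiv_refl g₂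
  rw [← h] at this
  exact this

end general

section dihedral
open DihedralGroup
variable {n : ℕ}

/-- membership predicate for the centralizer of `sr i`. -/
def pc (i : ZMod n) : DihedralGroup n → Prop
  | .r j => 2 * j = 0
  | .sr j => 2 * j = 2 * i

@[simp] lemma pc_r (i j : ZMod n) : pc i (r j) ↔ 2 * j = 0 := Iff.rfl
@[simp] lemma pc_sr (i j : ZMod n) : pc i (sr j) ↔ 2 * j = 2 * i := Iff.rfl

/-- the subgroup of rotations. -/
def rotS (n : ℕ) : Subgroup (DihedralGroup n) where
  carrier := Set.range DihedralGroup.r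
  one_mem' := ⟨0, rfl⟩
  mul_mem' := by rintro _ _ ⟨a, rfl⟩ ⟨b, rfl⟩; exact ⟨a + b, rfl⟩
  inv_mem' := by rintro _ ⟨a, rfl⟩; exact ⟨-a, rfl⟩

@[simp] lemma mem_rotS (x : DihedralGroup n) : x ∈ rotS n ↔ ∃ i, r i = x := Iff.rfl

/-- the centralizer of a reflection `sr i`. -/
def cenS (i : ZMod n) : Subgroup (DihedralGroup n) where
  carrier := {x | pc i x}
  one_mem' := show (2 : ZMod n) * 0 = 0 by ring
  mul_mem' := by
    rintro (a | a) (b | b) ha hb <;>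
      simp only [Set.mem_ofPred_eq, r_mul_r, r_mul_sr, sr_mul_r, sr_mul_sr, pc_r, pc_sr] at * <;>
      first
        | linear_combination ha + hb
        | linear_combination hb - ha
  inv_mem' := by
    rintro (a | a) h <;>
      simp only [Set.mem_ofPred_eq, pc_r, pc_sr] at *
    · show 2 * (-a) = 0
      linear_combination -h
    · exact h

@[simp] lemma mem_cenS (i : ZMod n) (x : DihedralGroup n) : x ∈ cenS i ↔ pc i x := Iff.rfl

@[simp] lemma r_inv (i : ZMod n) : (r i)⁻¹ = r (-i) := rfl
@[simp] lemma sr_inv (i : ZMod n) : (sr i)⁻¹ = sr i := rfl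

lemma cent_r_top (i : ZMod n) (hi : 2 * i = 0) :
    Subgroup.centralizer {(r i : DihedralGroup n)} = ⊤ := by
  rw [eq_top_iff]
  rintro (j | j) -
  · rw [Subgroup.mem_centralizer_iff]
    simp only [Set.mem_singleton_iff, forall_eq, r_mul_r]
    ring_nf
  · rw [Subgroup.mem_centralizer_iff]
    simp only [Set.mem_singleton_iff, forall_eq, r_mul_sr, sr_mul_r, sr.injEq]
    linear_combination -hi

lemma cent_r (i : ZMod n) (hi : 2 * i ≠ 0) :
    Subgroup.centralizer {(r i : DihedralGroup n)} = rotS n := by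
  ext x
  rw [Subgroup.mem_centralizer_iff]
  simp only [Set.mem_singleton_iff, forall_eq, mem_rotS]
  cases x with
  | r j =>
    simp only [r_mul_r, r.injEq]
    exact iff_of_true (add_comm i j) ⟨j, rfl⟩
  | sr j =>
    simp only [r_mul_sr, sr_mul_r, sr.injEq]
    constructor
    · intro h
      exact absurd (by linear_combination -h) hi
    · rintro ⟨k, hk⟩
      exact absurd hk (by simp)

lemma cent_sr (i : ZMod n) :
    Subgroup.centralizer {(sr i : DihedralGroup n)} = cenS i := by
  ext x
  rw [Subgroup.mem_centralizer_iff]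
  simp only [Set.mem_singleton_iff, forall_eq, mem_cenS]
  cases x with
  | r j =>
    simp only [sr_mul_r, r_mul_sr, sr.injEq, pc_r]
    constructor <;> intro h <;> linear_combination h
  | sr j =>
    simp only [sr_mul_sr, r.injEq, pc_sr]
    constructor <;> intro h <;> linear_combination h

lemma cenS_eq_iff (a b : ZMod n) : cenS a = cenS b ↔ 2 * a = 2 * b := by
  constructor
  · intro h
    have : (sr a : DihedralGroup n) ∈ cenS a := by simp
    rw [h] at this
    simpa using this
  · intro h
    ext x
    cases x <;> simp [h]

end dihedral

section dihedral2
open DihedralGroup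
variable {n : ℕ}

lemma conj_r_sr (k i : ZMod n) : r k * sr i * (r k)⁻¹ = sr (i - 2 * k) := by
  simp only [r_inv, r_mul_sr, sr_mul_r, sr.injEq]; ring

lemma conj_sr_sr (k i : ZMod n) : sr k * sr i * (sr k)⁻¹ = sr (2 * k - i) := by
  simp only [sr_inv, sr_mul_sr, r_mul_sr, sr.injEq]; ring

lemma conj_r_r (k i : ZMod n) : r k * r i * (r k)⁻¹ = r i := by
  simp only [r_inv, r_mul_r, r.injEq]; ring

lemma conj_sr_r (k i : ZMod n) : sr k * r i * (sr k)⁻¹ = r (-i) := by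
  simp only [sr_inv, sr_mul_r, sr_mul_sr, r.injEq]; ring

lemma no4 (h4 : n % 4 = 0) (k : ZMod n) : (4 : ZMod n) * k ≠ 2 := by
  intro h
  have hd : (4 : ℕ) ∣ n := Nat.dvd_of_mod_eq_zero h4
  have := congrArg (ZMod.castHom hd (ZMod 4)) h
  simp only [map_mul, map_ofNat] at this
  have h4' : ∀ x : ZMod 4, (4 : ZMod 4) * x ≠ 2 := by decide
  exact h4' _ this

lemma ex2 (h4 : n % 4 ≠ 0) (hn : 3 ≤ n) : ∃ K : ZMod n, (4 : ZMod n) * K = 2 := by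
  rcases Nat.even_or_odd n with he | ho
  · -- n even, n % 4 = 2
    refine ⟨((n + 2) / 4 : ℕ), ?_⟩
    obtain ⟨m, hm⟩ := he
    have h : 4 * ((n + 2) / 4) = n + 2 := by omega
    have : ((4 * ((n + 2) / 4) : ℕ) : ZMod n) = ((n + 2 : ℕ) : ZMod n) := by rw [h]
    push_cast at this
    rw [ZMod.natCast_self] at this
    rw [this]; ring
  · refine ⟨((n + 1) / 2 : ℕ), ?_⟩
    have h : 4 * ((n + 1) / 2) = 2 * n + 2 := by
      rcases ho with ⟨m, hm⟩; omega
    have : ((4 * ((n + 1) / 2) : ℕ) : ZMod n) = ((2 * n + 2 : ℕ) : ZMod n) := by rw [h]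
    push_cast at this
    rw [ZMod.natCast_self] at this
    rw [this]; ring

variable (hn2 : (2 : ZMod n) ≠ 0)

include hn2 in
lemma not_zEquiv_one_r : ¬ zEquiv (1 : DihedralGroup n) (r 1) := by
  rw [zEquiv_iff]
  rintro ⟨t, ht⟩
  rw [mul_one, mul_inv_cancel] at ht
  rw [show (1 : DihedralGroup n) = r 0 from rfl, cent_r_top 0 (by ring),
    cent_r 1 (by rwa [mul_one])] at ht
  have : (sr 0 : DihedralGroup n) ∈ rotS n := ht ▸ Subgroup.mem_top _
  obtain ⟨i, hi⟩ := this
  exact absurd hi (by simp)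

include hn2 in
lemma not_zEquiv_one_sr (a : ZMod n) : ¬ zEquiv (1 : DihedralGroup n) (sr a) := by
  rw [zEquiv_iff]
  rintro ⟨t, ht⟩
  rw [mul_one, mul_inv_cancel] at ht
  rw [show (1 : DihedralGroup n) = r 0 from rfl, cent_r_top 0 (by ring), cent_sr] at ht
  have : (r 1 : DihedralGroup n) ∈ cenS a := ht ▸ Subgroup.mem_top _
  rw [mem_cenS, pc_r, mul_one] at this
  exact hn2 this

include hn2 in
lemma not_zEquiv_r_sr (a : ZMod n) : ¬ zEquiv (r 1 : DihedralGroup n) (sr a) := by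
  rw [zEquiv_iff]
  rintro ⟨t, ht⟩
  rw [cent_sr] at ht
  have hrot : rotS n = cenS a := by
    rcases t with k | k
    · rwa [conj_r_r, cent_r 1 (by rwa [mul_one])] at ht
    · rw [conj_sr_r, cent_r (-1) (by intro h; exact hn2 (by linear_combination -h))] at ht
      exact ht
  have : (sr a : DihedralGroup n) ∈ rotS n := by rw [hrot]; simp
  obtain ⟨i, hi⟩ := this
  exact absurd hi (by simp)

lemma not_zEquiv_sr_sr (h4 : n % 4 = 0) : ¬ zEquiv (sr 0 : DihedralGroup n) (sr 1) := by
  rw [zEquiv_iff]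
  rintro ⟨t, ht⟩
  rw [cent_sr] at ht
  rcases t with k | k
  · rw [conj_r_sr, cent_sr, cenS_eq_iff] at ht
    exact no4 h4 (-k) (by linear_combination ht)
  · rw [conj_sr_sr, cent_sr, cenS_eq_iff] at ht
    exact no4 h4 k (by linear_combination ht)

lemma zEquiv_sr_sr_of_ne4 (h4 : n % 4 ≠ 0) (hn : 3 ≤ n) (i : ZMod n) :
    zEquiv (sr 0 : DihedralGroup n) (sr i) := by
  obtain ⟨K, hK⟩ := ex2 h4 hn
  rw [zEquiv_iff]
  refine ⟨sr (K * i), ?_⟩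
  rw [conj_sr_sr, cent_sr, cent_sr, cenS_eq_iff]
  linear_combination i * hK

lemma zEquiv_sr_sr_even [NeZero n] (i : ZMod n) (hpar : Even i.val) :
    zEquiv (sr 0 : DihedralGroup n) (sr i) := by
  obtain ⟨m, hm⟩ := hpar
  have hi : i = 2 * (m : ZMod n) := by
    have : ((i.val : ℕ) : ZMod n) = i := by simp [ZMod.natCast_val, ZMod.cast_id]
    rw [← this, hm]; push_cast; ring
  have := zEquiv_conj (sr (m : ZMod n)) (sr 0 : DihedralGroup n)
  rwa [conj_sr_sr, sub_zero, ← hi] at this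

lemma zEquiv_sr_sr_odd [NeZero n] (i : ZMod n) (hpar : Odd i.val) :
    zEquiv (sr 1 : DihedralGroup n) (sr i) := by
  obtain ⟨m, hm⟩ := hpar
  have hi : i = 2 * ((m : ZMod n) + 1) - 1 := by
    have : ((i.val : ℕ) : ZMod n) = i := by simp [ZMod.natCast_val, ZMod.cast_id]
    rw [← this, hm]; push_cast; ring
  have := zEquiv_conj (sr ((m : ZMod n) + 1)) (sr 1 : DihedralGroup n)
  rwa [conj_sr_sr, ← hi] at this

lemma zEquiv_one_r (i : ZMod n) (hi : 2 * i = 0) : zEquiv (1 : DihedralGroup n) (r i) := by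
  apply zEquiv_of_cent_eq
  rw [show (1 : DihedralGroup n) = r 0 from rfl, cent_r_top 0 (by ring), cent_r_top i hi]

include hn2 in
lemma zEquiv_r_r (i : ZMod n) (hi : 2 * i ≠ 0) : zEquiv (r 1 : DihedralGroup n) (r i) := by
  apply zEquiv_of_cent_eq
  rw [cent_r 1 (by rwa [mul_one]), cent_r i hi]

end dihedral2

/-- for `n ≥ 3`, the dihedral group of order `2n` has 4 z-classes if
`4 ∣ n`, and 3 z-classes otherwise. -/
theorem card_zClasses_dihedral (n : ℕ) (hn : 3 ≤ n) :
    Nat.card (zClasses (DihedralGroup n)) = if n % 4 = 0 then 4 else 3 := by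
  have : NeZero n := ⟨by omega⟩
  have h2 : (2 : ZMod n) ≠ 0 := by
    intro h
    have h' : ((2 : ℕ) : ZMod n) = 0 := by exact_mod_cast h
    rw [ZMod.natCast_eq_zero_iff] at h'
    have := Nat.le_of_dvd two_pos h'
    omega
  classical
  set f : DihedralGroup n → Set (DihedralGroup n) := fun g => {h | zEquiv g h} with hf
  have hfeq : ∀ g₁ g₂ : DihedralGroup n, zEquiv g₁ g₂ → f g₁ = f g₂ :=
    fun _ _ h => zClass_eq h
  have hfne : ∀ g₁ g₂ : DihedralGroup n, ¬ zEquiv g₁ g₂ → f g₁ ≠ f g₂ :=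
    fun _ _ h he => h (zEquiv_of_zClass_eq he)
  have d12 := hfne _ _ (not_zEquiv_one_r h2)
  have d13 := hfne _ _ (not_zEquiv_one_sr h2 0)
  have d23 := hfne _ _ (not_zEquiv_r_sr h2 0)
  by_cases h4 : n % 4 = 0
  · rw [if_pos h4]
    have d14 := hfne _ _ (not_zEquiv_one_sr h2 1)
    have d24 := hfne _ _ (not_zEquiv_r_sr h2 1)
    have d34 := hfne _ _ (not_zEquiv_sr_sr h4)
    have hr : zClasses (DihedralGroup n)
        = {f 1, f (DihedralGroup.r 1), f (DihedralGroup.sr 0), f (DihedralGroup.sr 1)} := by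
      apply Set.eq_of_subset_of_subset
      · rintro _ ⟨g, rfl⟩
        simp only [Set.mem_insert_iff, Set.mem_singleton_iff]
        rcases g with i | i
        · by_cases hi : 2 * i = 0
          · exact Or.inl (hfeq _ _ (zEquiv_one_r i hi)).symm
          · exact Or.inr (Or.inl (hfeq _ _ (zEquiv_r_r h2 i hi)).symm)
        · rcases Nat.even_or_odd i.val with hp | hp
          · exact Or.inr (Or.inr (Or.inl (hfeq _ _ (zEquiv_sr_sr_even i hp)).symm))
          · exact Or.inr (Or.inr (Or.inr (hfeq _ _ (zEquiv_sr_sr_odd i hp)).symm))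
      · intro x hx
        simp only [Set.mem_insert_iff, Set.mem_singleton_iff] at hx
        rcases hx with rfl | rfl | rfl | rfl <;> exact ⟨_, rfl⟩
    rw [hr, Nat.card_coe_set_eq,
      Set.ncard_insert_of_notMem (by simp [d12, d13, d14]),
      Set.ncard_insert_of_notMem (by simp [d23, d24]),
      Set.ncard_pair d34]
  · rw [if_neg h4]
    have hr : zClasses (DihedralGroup n)
        = {f 1, f (DihedralGroup.r 1), f (DihedralGroup.sr 0)} := by
      apply Set.eq_of_subset_of_subset
      · rintro _ ⟨g, rfl⟩
        simp only [Set.mem_insert_iff, Set.mem_singleton_iff]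
        rcases g with i | i
        · by_cases hi : 2 * i = 0
          · exact Or.inl (hfeq _ _ (zEquiv_one_r i hi)).symm
          · exact Or.inr (Or.inl (hfeq _ _ (zEquiv_r_r h2 i hi)).symm)
        · exact Or.inr (Or.inr (hfeq _ _ (zEquiv_sr_sr_of_ne4 h4 hn i)).symm)
      · intro x hx
        simp only [Set.mem_insert_iff, Set.mem_singleton_iff] at hx
        rcases hx with rfl | rfl | rfl <;> exact ⟨_, rfl⟩
    rw [hr, Nat.card_coe_set_eq,
      Set.ncard_insert_of_notMem (by simp [d12, d13]),
      Set.ncard_pair d23]
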